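/- Let M be an n×n block-tridiagonal matrix of m×m real blocks with every odd diagonal block A₁, A₃, A₅, … invertible, and assume the Schur complement M₀ := D − C·A⁻¹·B of the odd–even permuted matrix [[A, B], [C, D]] is invertible. Define S⁻¹ as the block diagonal matrix (in the original ordering) with A_i⁻¹ at odd diagonal positions i and the zero block at even positions; define P as the block matrix from even (coarse) block indices to all (fine) block indices whose block in fine row i, coarse column corresponding to even index j is: the identity if i = j; −A_i⁻¹·L_i if i is odd and j = i−1; −A_i⁻¹·U_i if i is odd and j = i+1; and 0 otherwise; and set R := Pᵀ. Then M is invertible and M⁻¹ = S⁻¹ + P·M₀⁻¹·R·(I − M·S⁻¹); in particular one Richardson iteration preconditioned with this two-level method (pre-smoothing with S⁻¹, coarse correction with M₀⁻¹, no post-smoothing) solves M·u = f exactly. -/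

import Mathlib

open Matrix

/-- The odd (1-based) block indices, 0-based: position `k` ↦ original index `2k`. -/
def oddEmb (n : ℕ) (k : Fin ((n + 1) / 2)) : Fin n :=
  ⟨2 * k, by have := k.2; omega⟩

/-- The even (1-based) block indices: position `k` ↦ original index `2k+1`. -/
def evenEmb (n : ℕ) (k : Fin (n / 2)) : Fin n :=
  ⟨2 * k + 1, by have := k.2; omega⟩

/-- The `m×m` block of a flattened `n×n` block matrix at block position `(i, j)`. -/
def blk {n m : ℕ} (M : Matrix (Fin n × Fin m) (Fin n × Fin m) ℝ) (i j : Fin n) :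
    Matrix (Fin m) (Fin m) ℝ :=
  Matrix.of fun a b => M (i, a) (j, b)

/-- The smoother `S⁻¹`: block diagonal with `Aᵢ⁻¹` at the odd (1-based) diagonal
positions and zero blocks at the even positions. -/
noncomputable def smootherInv (n m : ℕ)
    (M : Matrix (Fin n × Fin m) (Fin n × Fin m) ℝ) :
    Matrix (Fin n × Fin m) (Fin n × Fin m) ℝ :=
  Matrix.of fun p q =>
    if p.1 = q.1 ∧ (p.1 : ℕ) % 2 = 0 then ((blk M p.1 p.1)⁻¹) p.2 q.2 else 0

/-- The prolongation `P` from the even (coarse) block indices to all (fine) block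
indices: the block in fine row `i`, coarse column `j` (even original index) is the
identity if `i = j`, `-Aᵢ⁻¹·Lᵢ` if `i` is odd and `j = i - 1`, `-Aᵢ⁻¹·Uᵢ` if `i` is
odd and `j = i + 1`, and `0` otherwise (1-based indexing). -/
noncomputable def prol (n m : ℕ)
    (M : Matrix (Fin n × Fin m) (Fin n × Fin m) ℝ) :
    Matrix (Fin n × Fin m) (Fin (n / 2) × Fin m) ℝ :=
  Matrix.of fun p c =>
    if (p.1 : ℕ) = 2 * (c.1 : ℕ) + 1 then (if p.2 = c.2 then 1 else 0)
    else if (p.1 : ℕ) = 2 * (c.1 : ℕ) + 2 then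
      -- row i odd, column j = i - 1 : the block is -Aᵢ⁻¹·Lᵢ
      (-((blk M p.1 p.1)⁻¹ * blk M p.1 (evenEmb n c.1))) p.2 c.2
    else if (p.1 : ℕ) = 2 * (c.1 : ℕ) then
      -- row i odd, column j = i + 1 : the block is -Aᵢ⁻¹·Uᵢ
      (-((blk M p.1 p.1)⁻¹ * blk M p.1 (evenEmb n c.1))) p.2 c.2
    else 0

/-- The coarse operator `M₀ = D - C·A⁻¹·B`, the Schur complement of the odd–even
reordered matrix. -/
noncomputable def coarseOp (n m : ℕ)
    (M : Matrix (Fin n × Fin m) (Fin n × Fin m) ℝ) :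
    Matrix (Fin (n / 2) × Fin m) (Fin (n / 2) × Fin m) ℝ :=
  M.submatrix (fun p : Fin (n / 2) × Fin m => (evenEmb n p.1, p.2))
              (fun p : Fin (n / 2) × Fin m => (evenEmb n p.1, p.2)) -
    M.submatrix (fun p : Fin (n / 2) × Fin m => (evenEmb n p.1, p.2))
                (fun p : Fin ((n + 1) / 2) × Fin m => (oddEmb n p.1, p.2)) *
    (M.submatrix (fun p : Fin ((n + 1) / 2) × Fin m => (oddEmb n p.1, p.2))
                 (fun p : Fin ((n + 1) / 2) × Fin m => (oddEmb n p.1, p.2)))⁻¹ *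
    M.submatrix (fun p : Fin ((n + 1) / 2) × Fin m => (oddEmb n p.1, p.2))
                (fun p : Fin (n / 2) × Fin m => (evenEmb n p.1, p.2))

namespace TwoLevelCR

def oddP (n m : ℕ) : Fin ((n + 1) / 2) × Fin m → Fin n × Fin m :=
  fun p => (oddEmb n p.1, p.2)

def evP (n m : ℕ) : Fin (n / 2) × Fin m → Fin n × Fin m :=
  fun p => (evenEmb n p.1, p.2)

def perm (n m : ℕ) : (Fin n × Fin m) ≃ ((Fin ((n + 1) / 2) × Fin m) ⊕ (Fin (n / 2) × Fin m)) where
  toFun p :=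
    if h : (p.1 : ℕ) % 2 = 0 then
      Sum.inl (⟨(p.1 : ℕ) / 2, by have := p.1.2; omega⟩, p.2)
    else
      Sum.inr (⟨(p.1 : ℕ) / 2, by have := p.1.2; omega⟩, p.2)
  invFun := Sum.elim (oddP n m) (evP n m)
  left_inv := by
    rintro ⟨i, a⟩
    by_cases h : (i : ℕ) % 2 = 0 <;>
      simp only [h, dif_pos, dif_neg, not_false_iff, Sum.elim_inl, Sum.elim_inr, oddP, evP,
        oddEmb, evenEmb] <;>
      exact Prod.ext (Fin.ext (by simp; omega)) rfl
  right_inv := by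
    rintro (⟨k, a⟩ | ⟨k, a⟩) <;>
      simp only [Sum.elim_inl, Sum.elim_inr, oddP, evP, oddEmb, evenEmb]
    · split_ifs with h
      · simp [Prod.ext_iff, Fin.ext_iff]
      · omega
    · split_ifs with h
      · omega
      · simp [Prod.ext_iff, Fin.ext_iff]
        omega

variable (n m : ℕ) (M : Matrix (Fin n × Fin m) (Fin n × Fin m) ℝ)

noncomputable def Asub : Matrix (Fin ((n + 1) / 2) × Fin m) (Fin ((n + 1) / 2) × Fin m) ℝ :=
  M.submatrix (oddP n m) (oddP n m)

noncomputable def Bsub : Matrix (Fin ((n + 1) / 2) × Fin m) (Fin (n / 2) × Fin m) ℝ :=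
  M.submatrix (oddP n m) (evP n m)

noncomputable def Csub : Matrix (Fin (n / 2) × Fin m) (Fin ((n + 1) / 2) × Fin m) ℝ :=
  M.submatrix (evP n m) (oddP n m)

noncomputable def Dsub : Matrix (Fin (n / 2) × Fin m) (Fin (n / 2) × Fin m) ℝ :=
  M.submatrix (evP n m) (evP n m)

noncomputable def Ainv : Matrix (Fin ((n + 1) / 2) × Fin m) (Fin ((n + 1) / 2) × Fin m) ℝ :=
  Matrix.of fun p q =>
    if p.1 = q.1 then ((blk M (oddEmb n p.1) (oddEmb n p.1))⁻¹) p.2 q.2 else 0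

variable {n m M} in
lemma hAmul (htri : ∀ i j : Fin n, ((i : ℕ) + 1 < (j : ℕ) ∨ (j : ℕ) + 1 < (i : ℕ)) →
      ∀ a b : Fin m, M (i, a) (j, b) = 0)
    (hodd : ∀ k : Fin ((n + 1) / 2), IsUnit (blk M (oddEmb n k) (oddEmb n k))) : Asub n m M * Ainv n m M = 1 := by
  ext ⟨k, a⟩ ⟨l, b⟩
  rw [Matrix.mul_apply, Fintype.sum_prod_type]
  have step : ∀ k' : Fin ((n + 1) / 2),
      (∑ x : Fin m, Asub n m M (k, a) (k', x) * Ainv n m M (k', x) (l, b)) =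
      if k' = l then ∑ x : Fin m,
        M (oddEmb n k, a) (oddEmb n k', x) * ((blk M (oddEmb n l) (oddEmb n l))⁻¹) x b
      else 0 := by
    intro k'
    by_cases h : k' = l
    · subst h
      simp [Ainv, Asub, oddP]
    · simp [Ainv, Asub, h]
  simp only [step, Finset.sum_ite_eq, Finset.sum_ite_eq', Finset.mem_univ, if_true]
  by_cases hkl : k = l
  · subst hkl
    have hd : IsUnit (blk M (oddEmb n k) (oddEmb n k)).det :=
      (Matrix.isUnit_iff_isUnit_det _).mp (hodd k)
    have : (∑ x : Fin m,
        M (oddEmb n k, a) (oddEmb n k, x) * ((blk M (oddEmb n k) (oddEmb n k))⁻¹) x b) =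
        (blk M (oddEmb n k) (oddEmb n k) * (blk M (oddEmb n k) (oddEmb n k))⁻¹) a b := by
      rw [Matrix.mul_apply]; rfl
    rw [this, Matrix.mul_nonsing_inv _ hd, Matrix.one_apply, Matrix.one_apply]
    by_cases hab : a = b <;> simp [hab, Prod.ext_iff]
  · have hz : ∀ x : Fin m, M (oddEmb n k, a) (oddEmb n l, x) = 0 := by
      intro x
      apply htri
      have : (k : ℕ) ≠ (l : ℕ) := fun h => hkl (Fin.ext h)
      simp only [oddEmb]
      omega
    simp [hz, Matrix.one_apply, Prod.ext_iff, hkl]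

variable {n m M} in
lemma hAmul' (htri : ∀ i j : Fin n, ((i : ℕ) + 1 < (j : ℕ) ∨ (j : ℕ) + 1 < (i : ℕ)) →
      ∀ a b : Fin m, M (i, a) (j, b) = 0)
    (hodd : ∀ k : Fin ((n + 1) / 2), IsUnit (blk M (oddEmb n k) (oddEmb n k))) : Ainv n m M * Asub n m M = 1 := by
  ext ⟨k, a⟩ ⟨l, b⟩
  rw [Matrix.mul_apply, Fintype.sum_prod_type]
  have step : ∀ k' : Fin ((n + 1) / 2),
      (∑ x : Fin m, Ainv n m M (k, a) (k', x) * Asub n m M (k', x) (l, b)) =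
      if k = k' then ∑ x : Fin m,
        ((blk M (oddEmb n k) (oddEmb n k))⁻¹) a x * M (oddEmb n k, x) (oddEmb n l, b)
      else 0 := by
    intro k'
    by_cases h : k = k'
    · subst h
      simp [Ainv, Asub, oddP]
    · simp [Ainv, Asub, h]
  simp only [step, Finset.sum_ite_eq, Finset.sum_ite_eq', Finset.mem_univ, if_true]
  by_cases hkl : k = l
  · subst hkl
    have hd : IsUnit (blk M (oddEmb n k) (oddEmb n k)).det :=
      (Matrix.isUnit_iff_isUnit_det _).mp (hodd k)
    have : (∑ x : Fin m,
        ((blk M (oddEmb n k) (oddEmb n k))⁻¹) a x * M (oddEmb n k, x) (oddEmb n k, b)) =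
        ((blk M (oddEmb n k) (oddEmb n k))⁻¹ * blk M (oddEmb n k) (oddEmb n k)) a b := by
      rw [Matrix.mul_apply]; rfl
    rw [this, Matrix.nonsing_inv_mul _ hd, Matrix.one_apply, Matrix.one_apply]
    by_cases hab : a = b <;> simp [hab, Prod.ext_iff]
  · have hz : ∀ x : Fin m, M (oddEmb n k, x) (oddEmb n l, b) = 0 := by
      intro x
      apply htri
      have : (k : ℕ) ≠ (l : ℕ) := fun h => hkl (Fin.ext h)
      simp only [oddEmb]
      omega
    simp [hz, Matrix.one_apply, Prod.ext_iff, hkl]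

variable {n m M} in
lemma hAinv (htri : ∀ i j : Fin n, ((i : ℕ) + 1 < (j : ℕ) ∨ (j : ℕ) + 1 < (i : ℕ)) →
      ∀ a b : Fin m, M (i, a) (j, b) = 0)
    (hodd : ∀ k : Fin ((n + 1) / 2), IsUnit (blk M (oddEmb n k) (oddEmb n k))) : (Asub n m M)⁻¹ = Ainv n m M :=
  Matrix.inv_eq_right_inv (hAmul htri hodd)

variable {n m M} in
lemma prol_odd (htri : ∀ i j : Fin n, ((i : ℕ) + 1 < (j : ℕ) ∨ (j : ℕ) + 1 < (i : ℕ)) →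
      ∀ a b : Fin m, M (i, a) (j, b) = 0)
    (p : Fin ((n + 1) / 2) × Fin m) (c : Fin (n / 2) × Fin m) :
    prol n m M (oddP n m p) c = (-(Ainv n m M * Bsub n m M)) p c := by
  rcases p with ⟨k, a⟩; rcases c with ⟨c, b⟩
  have hsum : (Ainv n m M * Bsub n m M) (k, a) (c, b) =
      ∑ x : Fin m, ((blk M (oddEmb n k) (oddEmb n k))⁻¹) a x * M (oddEmb n k, x) (evenEmb n c, b) := by
    rw [Matrix.mul_apply, Fintype.sum_prod_type]
    have step : ∀ k' : Fin ((n + 1) / 2),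
        (∑ x : Fin m, Ainv n m M (k, a) (k', x) * Bsub n m M (k', x) (c, b)) =
        if k = k' then ∑ x : Fin m,
          ((blk M (oddEmb n k) (oddEmb n k))⁻¹) a x * M (oddEmb n k, x) (evenEmb n c, b)
        else 0 := by
      intro k'
      by_cases h : k = k'
      · subst h; simp [Ainv, Bsub, oddP, evP]
      · simp [Ainv, h]
    simp only [step, Finset.sum_ite_eq, Finset.mem_univ, if_true]
  have hcoe : ((oddEmb n k : Fin n) : ℕ) = 2 * (k : ℕ) := rfl
  show prol n m M (oddEmb n k, a) (c, b) = _
  simp only [prol, Matrix.of_apply, hcoe]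
  by_cases h1 : 2 * (k : ℕ) = 2 * (c : ℕ) + 2
  · rw [if_neg (by omega), if_pos h1, Matrix.neg_apply, Matrix.neg_apply, Matrix.mul_apply, hsum]
    rfl
  · by_cases h2 : 2 * (k : ℕ) = 2 * (c : ℕ)
    · rw [if_neg (by omega), if_neg h1, if_pos h2, Matrix.neg_apply, Matrix.neg_apply,
        Matrix.mul_apply, hsum]
      rfl
    · rw [if_neg (by omega), if_neg h1, if_neg h2, Matrix.neg_apply, hsum]
      have hz : ∀ x : Fin m, M (oddEmb n k, x) (evenEmb n c, b) = 0 := by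
        intro x
        apply htri
        simp only [oddEmb, evenEmb]
        omega
      simp [hz]

variable {n m M} in
lemma hMblocks : M.submatrix ⇑(perm n m).symm ⇑(perm n m).symm =
    fromBlocks (Asub n m M) (Bsub n m M) (Csub n m M) (Dsub n m M) := by
  ext (p | p) (q | q) <;> rfl

variable {n m M} in
lemma hSblocks : (smootherInv n m M).submatrix ⇑(perm n m).symm ⇑(perm n m).symm =
    fromBlocks (Ainv n m M) 0 0 0 := by
  ext (⟨k, a⟩ | ⟨k, a⟩) (⟨l, b⟩ | ⟨l, b⟩)
  · show smootherInv n m M (oddEmb n k, a) (oddEmb n l, b) = Ainv n m M (k, a) (l, b)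
    simp only [smootherInv, Ainv, Matrix.of_apply]
    by_cases h : k = l
    · subst h
      rw [if_pos ⟨rfl, by simp [oddEmb, Nat.mul_mod_right]⟩, if_pos rfl]
    · rw [if_neg, if_neg h]
      rintro ⟨h1, -⟩
      exact h (Fin.ext (by have := congrArg Fin.val h1; simp only [oddEmb] at this; omega))
  · show smootherInv n m M (oddEmb n k, a) (evenEmb n l, b) = 0
    simp only [smootherInv, Matrix.of_apply]
    rw [if_neg]
    rintro ⟨h1, -⟩
    have := congrArg Fin.val h1
    simp only [oddEmb, evenEmb] at this
    omega
  · show smootherInv n m M (evenEmb n k, a) (oddEmb n l, b) = 0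
    simp only [smootherInv, Matrix.of_apply]
    rw [if_neg]
    rintro ⟨-, h2⟩
    have : ((evenEmb n k : Fin n) : ℕ) = 2 * (k : ℕ) + 1 := rfl
    omega
  · show smootherInv n m M (evenEmb n k, a) (evenEmb n l, b) = 0
    simp only [smootherInv, Matrix.of_apply]
    rw [if_neg]
    rintro ⟨-, h2⟩
    have : ((evenEmb n k : Fin n) : ℕ) = 2 * (k : ℕ) + 1 := rfl
    omega

variable {n m M} in
lemma hPblocks (htri : ∀ i j : Fin n, ((i : ℕ) + 1 < (j : ℕ) ∨ (j : ℕ) + 1 < (i : ℕ)) →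
      ∀ a b : Fin m, M (i, a) (j, b) = 0) :
    (prol n m M).submatrix ⇑(perm n m).symm id =
      fromRows (-(Ainv n m M * Bsub n m M)) 1 := by
  ext (p | ⟨k, a⟩) ⟨c, b⟩
  · exact prol_odd htri p (c, b)
  · show prol n m M (evenEmb n k, a) (c, b) = (1 : Matrix (Fin (n / 2) × Fin m) _ ℝ) (k, a) (c, b)
    have hcoe : ((evenEmb n k : Fin n) : ℕ) = 2 * (k : ℕ) + 1 := rfl
    simp only [prol, Matrix.of_apply, hcoe, Matrix.one_apply]
    by_cases h : k = c
    · subst h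
      rw [if_pos rfl]
      by_cases hab : a = b <;> simp [hab, Prod.ext_iff]
    · rw [if_neg (by have : (k : ℕ) ≠ (c : ℕ) := fun hh => h (Fin.ext hh); omega),
        if_neg (by omega), if_neg (by omega), if_neg (by simp [Prod.ext_iff, h])]

lemma one_sub_blocks {o e : Type*} [Fintype o] [Fintype e] [DecidableEq o] [DecidableEq e]
    (W : Matrix e o ℝ) :
    (1 : Matrix (o ⊕ e) (o ⊕ e) ℝ) - fromBlocks 1 0 W 0 = fromBlocks 0 0 (-W) 1 := by
  rw [← Matrix.fromBlocks_one]
  ext (i | i) (j | j) <;>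
    simp [Matrix.fromBlocks, Matrix.sub_apply, Matrix.one_apply]

lemma key_alg {o e : Type*} [Fintype o] [Fintype e] [DecidableEq o] [DecidableEq e]
    (A Ai : Matrix o o ℝ) (B : Matrix o e ℝ) (C : Matrix e o ℝ) (D G : Matrix e e ℝ)
    (hA1 : A * Ai = 1) (hG : (D - C * Ai * B) * G = 1) :
    fromBlocks (1 : Matrix o o ℝ) (0 : Matrix o e ℝ) (C * Ai) (0 : Matrix e e ℝ) +
      fromBlocks A B C D *
        (fromRows (-(Ai * B)) (1 : Matrix e e ℝ) * (G * (fromCols (-(Ai * B))ᵀ (1 : Matrix e e ℝ) * fromBlocks (0 : Matrix o o ℝ) (0 : Matrix o e ℝ) (-(C * Ai)) (1 : Matrix e e ℝ)))) = 1 := by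
  have hA1' : ∀ (W : Matrix o o ℝ), A * (Ai * W) = W := fun W => by
    rw [← Matrix.mul_assoc, hA1, Matrix.one_mul]
  have hA2' : ∀ (W : Matrix o e ℝ), A * (Ai * W) = W := fun W => by
    rw [← Matrix.mul_assoc, hA1, Matrix.one_mul]
  have hG' : D * G - C * (Ai * (B * G)) = 1 := by
    have h := hG
    rw [Matrix.sub_mul] at h
    simpa [Matrix.mul_assoc] using h
  have h21 : D * (G * (C * Ai)) - C * (Ai * (B * (G * (C * Ai)))) = C * Ai := by
    have h := congrArg (fun X => X * (C * Ai)) hG'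
    simpa [Matrix.sub_mul, Matrix.one_mul, Matrix.mul_assoc] using h
  rw [Matrix.fromCols_mul_fromBlocks]
  simp only [Matrix.mul_zero, Matrix.zero_mul, Matrix.one_mul, Matrix.mul_one, add_zero, zero_add]
  rw [Matrix.mul_fromCols, Matrix.fromRows_mul_fromCols, Matrix.fromBlocks_multiply]
  simp only [Matrix.fromBlocks_add]
  rw [← Matrix.fromBlocks_one, Matrix.fromBlocks_inj]
  refine ⟨?_, ?_, ?_, ?_⟩
  · simp only [Matrix.mul_zero, Matrix.zero_mul, Matrix.one_mul, Matrix.mul_one, add_zero,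
      zero_add, Matrix.mul_neg, Matrix.neg_mul, neg_neg, Matrix.mul_assoc, hA1, hA1', hA2']
    abel
  · simp only [Matrix.mul_zero, Matrix.zero_mul, Matrix.one_mul, Matrix.mul_one, add_zero,
      zero_add, Matrix.mul_neg, Matrix.neg_mul, neg_neg, Matrix.mul_assoc, hA1, hA1', hA2']
    abel
  · simp only [Matrix.mul_zero, Matrix.zero_mul, Matrix.one_mul, Matrix.mul_one, add_zero,
      zero_add, Matrix.mul_neg, Matrix.neg_mul, neg_neg, Matrix.mul_assoc]
    calc C * Ai + (C * (Ai * (B * (G * (C * Ai)))) + -(D * (G * (C * Ai))))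
        = C * Ai - (D * (G * (C * Ai)) - C * (Ai * (B * (G * (C * Ai))))) := by abel
      _ = C * Ai - C * Ai := by rw [h21]
      _ = 0 := sub_self _
  · simp only [Matrix.mul_zero, Matrix.zero_mul, Matrix.one_mul, Matrix.mul_one, add_zero,
      zero_add, Matrix.mul_neg, Matrix.neg_mul, neg_neg, Matrix.mul_assoc]
    calc -(C * (Ai * (B * G))) + D * G = D * G - C * (Ai * (B * G)) := by abel
      _ = 1 := hG'

end TwoLevelCR


/-- **Two-level direct solver (cyclic reduction as multigrid).**
For a block-tridiagonal `M` with invertible odd diagonal blocks and invertible Schur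
complement `M₀ = D - C·A⁻¹·B` of the odd–even reordered matrix, with the smoother
`S⁻¹`, prolongation `P` and restriction `R = Pᵀ` defined above, `M` is invertible and
`M⁻¹ = S⁻¹ + P·M₀⁻¹·R·(I - M·S⁻¹)`; in particular one Richardson iteration
preconditioned with this two-level method (pre-smoothing with `S⁻¹`, coarse correction
with `M₀⁻¹`, no post-smoothing) solves `M·u = f` exactly. -/
theorem two_level_cyclic_reduction_direct_solver (m n : ℕ)
    (M : Matrix (Fin n × Fin m) (Fin n × Fin m) ℝ)
    (htri : ∀ i j : Fin n, ((i : ℕ) + 1 < (j : ℕ) ∨ (j : ℕ) + 1 < (i : ℕ)) →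
      ∀ a b : Fin m, M (i, a) (j, b) = 0)
    (hodd : ∀ k : Fin ((n + 1) / 2), IsUnit (blk M (oddEmb n k) (oddEmb n k)))
    (hM₀ : IsUnit (coarseOp n m M)) :
    IsUnit M ∧
    M⁻¹ = smootherInv n m M +
      prol n m M * (coarseOp n m M)⁻¹ * (prol n m M)ᵀ *
        ((1 : Matrix (Fin n × Fin m) (Fin n × Fin m) ℝ) - M * smootherInv n m M) ∧
    ∀ f : Fin n × Fin m → ℝ,
      M *ᵥ (smootherInv n m M *ᵥ f +
        prol n m M *ᵥ ((coarseOp n m M)⁻¹ *ᵥ ((prol n m M)ᵀ *ᵥ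
          (f - M *ᵥ (smootherInv n m M *ᵥ f))))) = f := by
  have hA1 : TwoLevelCR.Asub n m M * TwoLevelCR.Ainv n m M = 1 := TwoLevelCR.hAmul htri hodd
  have hAi : (TwoLevelCR.Asub n m M)⁻¹ = TwoLevelCR.Ainv n m M := TwoLevelCR.hAinv htri hodd
  have hM0eq : coarseOp n m M = TwoLevelCR.Dsub n m M -
      TwoLevelCR.Csub n m M * TwoLevelCR.Ainv n m M * TwoLevelCR.Bsub n m M := by
    rw [← hAi]; rfl
  have hGmul : (TwoLevelCR.Dsub n m M -
      TwoLevelCR.Csub n m M * TwoLevelCR.Ainv n m M * TwoLevelCR.Bsub n m M) *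
      (coarseOp n m M)⁻¹ = 1 := by
    rw [← hM0eq]
    exact Matrix.mul_nonsing_inv _ ((Matrix.isUnit_iff_isUnit_det _).mp hM₀)
  have key : M * (smootherInv n m M + prol n m M * (coarseOp n m M)⁻¹ * (prol n m M)ᵀ *
      (1 - M * smootherInv n m M)) = 1 := by
    apply (Matrix.reindex (TwoLevelCR.perm n m) (TwoLevelCR.perm n m)).injective
    rw [Matrix.reindex_apply, Matrix.reindex_apply,
      Matrix.submatrix_one_equiv (TwoLevelCR.perm n m).symm]
    rw [show prol n m M * (coarseOp n m M)⁻¹ * (prol n m M)ᵀ * (1 - M * smootherInv n m M)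
        = prol n m M * ((coarseOp n m M)⁻¹ * ((prol n m M)ᵀ * (1 - M * smootherInv n m M)))
      from by rw [Matrix.mul_assoc, Matrix.mul_assoc]]
    rw [mul_add, Matrix.submatrix_add]
    simp only [Pi.add_apply]
    rw [← Matrix.submatrix_mul_equiv M (smootherInv n m M)
      ⇑(TwoLevelCR.perm n m).symm (TwoLevelCR.perm n m).symm ⇑(TwoLevelCR.perm n m).symm]
    rw [← Matrix.submatrix_mul_equiv M
      (prol n m M * ((coarseOp n m M)⁻¹ * ((prol n m M)ᵀ * (1 - M * smootherInv n m M))))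
      ⇑(TwoLevelCR.perm n m).symm (TwoLevelCR.perm n m).symm ⇑(TwoLevelCR.perm n m).symm]
    rw [← Matrix.submatrix_mul_equiv (prol n m M)
      ((coarseOp n m M)⁻¹ * ((prol n m M)ᵀ * (1 - M * smootherInv n m M)))
      ⇑(TwoLevelCR.perm n m).symm (Equiv.refl _) ⇑(TwoLevelCR.perm n m).symm]
    rw [← Matrix.submatrix_mul_equiv (coarseOp n m M)⁻¹
      ((prol n m M)ᵀ * (1 - M * smootherInv n m M))
      ⇑(Equiv.refl _) (Equiv.refl _) ⇑(TwoLevelCR.perm n m).symm]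
    rw [← Matrix.submatrix_mul_equiv (prol n m M)ᵀ (1 - M * smootherInv n m M)
      ⇑(Equiv.refl _) (TwoLevelCR.perm n m).symm ⇑(TwoLevelCR.perm n m).symm]
    simp only [Equiv.coe_refl, Matrix.submatrix_id_id]
    rw [← Matrix.transpose_submatrix]
    rw [Matrix.submatrix_sub]
    simp only [Pi.sub_apply]
    rw [Matrix.submatrix_one_equiv (TwoLevelCR.perm n m).symm,
      ← Matrix.submatrix_mul_equiv M (smootherInv n m M)
        ⇑(TwoLevelCR.perm n m).symm (TwoLevelCR.perm n m).symm ⇑(TwoLevelCR.perm n m).symm]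
    rw [TwoLevelCR.hMblocks, TwoLevelCR.hSblocks, TwoLevelCR.hPblocks htri]
    rw [Matrix.transpose_fromRows, Matrix.transpose_one]
    rw [Matrix.fromBlocks_multiply]
    simp only [Matrix.mul_zero, Matrix.zero_mul, add_zero, zero_add, hA1]
    rw [TwoLevelCR.one_sub_blocks]
    exact TwoLevelCR.key_alg _ _ _ _ _ _ hA1 hGmul
  refine ⟨(Matrix.isUnit_iff_isUnit_det M).mpr (Matrix.isUnit_det_of_right_inverse key),
    Matrix.inv_eq_right_inv key, ?_⟩
  intro f
  rw [show f - M *ᵥ (smootherInv n m M *ᵥ f) = (1 - M * smootherInv n m M) *ᵥ f from by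
    rw [Matrix.sub_mulVec, Matrix.one_mulVec, Matrix.mulVec_mulVec]]
  simp only [Matrix.mulVec_mulVec]
  rw [← Matrix.add_mulVec, Matrix.mulVec_mulVec]
  rw [show M * (smootherInv n m M + prol n m M * ((coarseOp n m M)⁻¹ *
      ((prol n m M)ᵀ * (1 - M * smootherInv n m M)))) = 1 from by
    rw [show prol n m M * ((coarseOp n m M)⁻¹ * ((prol n m M)ᵀ *
        (1 - M * smootherInv n m M))) = prol n m M * (coarseOp n m M)⁻¹ * (prol n m M)ᵀ *
        (1 - M * smootherInv n m M) from by rw [← Matrix.mul_assoc, ← Matrix.mul_assoc]]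
    exact key]
  rw [Matrix.one_mulVec]
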